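/- Let n ≥ 1 and w ∈ Z^n_par(G,A), where A = ∏_{g∈Λ} A_g is a product of blocks with transitive unital partial action α. Then w(x₁,…,x_n) = 1_{(x₁,…,x_n)}·∏_{g∈Λ} θ_g[ w(g⁻¹x₁,x₂,…,x_n) + Σ_{k=1}^{n−1}(−1)^k w(g⁻¹,x₁,…,x_kx_{k+1},…,x_n) + (−1)^n w(g⁻¹,x₁,…,x_{n−1}) ], where θ_g(a) = α_g(pr₁(a)). -/

import Mathlib

noncomputable section

/-- The idempotent `1_{(x₁,…,x_n)} = 1_{x₁} 1_{x₁x₂} ⋯ 1_{x₁⋯x_n}` of `A`. -/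
def oneT {G : Type*} [Group G] {A : Type*} [Ring A] (e : G → A) {n : ℕ}
    (v : Fin n → G) : A :=
  (List.ofFn fun i : Fin n => e (Fin.partialProd v i.succ)).prod

/-- The projection `pr₁` of `A = ∏_{i} A_i` onto the block indexed by `i₀`. -/
def proj0 {ι : Type*} [DecidableEq ι] (R : ι → Type*) [∀ i, Ring (R i)] (i₀ : ι)
    (a : Π i, R i) : Π i, R i := fun j => if j = i₀ then a j else 0

/-- The homomorphism `θ_g : A → A_g`, `θ_g(a) = α_g(pr₁(a))`, for `g = toG i ∈ Λ`. -/
def theta {G : Type*} [Group G] {ι : Type*} [DecidableEq ι] (R : ι → Type*)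
    [∀ i, Ring (R i)] (e : G → Π i, R i) (act : G → (Π i, R i) → Π i, R i)
    (i₀ : ι) (toG : ι → G) (i : ι) (a : Π i, R i) : Π i, R i :=
  act (toG i) (e (toG i)⁻¹ * proj0 R i₀ a)


lemma partialProd_contractNth_succ {M : Type*} [Monoid M] {m : ℕ}
    (f : Fin (m + 1) → M) (k : Fin (m + 1)) (i : Fin m) :
    Fin.partialProd (Fin.contractNth k (· * ·) f) i.succ
      = Fin.partialProd f ((k.succAbove i).succ) := by
  obtain ⟨iv, hiv⟩ := i
  induction iv with
  | zero =>
    set x : Fin m := ⟨0, hiv⟩ with hx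
    have hx0 : Fin.partialProd (Fin.contractNth k (· * ·) f) x.castSucc = 1 := by
      have : x.castSucc = 0 := by ext; simp [hx]
      rw [this, Fin.partialProd_zero]
    have hfx0 : Fin.partialProd f x.castSucc.castSucc = 1 := by
      have : x.castSucc.castSucc = 0 := by ext; simp [hx]
      rw [this, Fin.partialProd_zero]
    rcases Nat.eq_zero_or_pos k.val with hk | hk
    · have hsa : k.succAbove x = x.succ :=
        Fin.succAbove_of_le_castSucc _ _ (by simp [Fin.le_def, hk])
      have hc : Fin.contractNth k (· * ·) f x = f x.castSucc * f x.succ :=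
        Fin.contractNth_apply_of_eq k _ f _ (by simp [hx, hk])
      have hI : x.succ.castSucc = x.castSucc.succ := (Fin.succ_castSucc _).symm
      rw [hsa, Fin.partialProd_succ, hx0, one_mul, hc,
        Fin.partialProd_succ, hI, Fin.partialProd_succ, hfx0, one_mul]
    · have hsa : k.succAbove x = x.castSucc :=
        Fin.succAbove_of_castSucc_lt _ _ (by simp [Fin.lt_def, hx, hk])
      have hc : Fin.contractNth k (· * ·) f x = f x.castSucc :=
        Fin.contractNth_apply_of_lt k _ f _ (by simp [hx, hk])
      rw [hsa, Fin.partialProd_succ, hx0, one_mul, hc,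
        Fin.partialProd_succ, hfx0, one_mul]
  | succ j ih =>
    have hj : j < m := Nat.lt_of_succ_lt hiv
    have ihj := ih hj
    set i' : Fin m := ⟨j + 1, hiv⟩ with hi'
    set ip : Fin m := ⟨j, hj⟩ with hip
    have hcs : i'.castSucc = ip.succ := by ext; simp [hi', hip]
    rw [Fin.partialProd_succ, hcs, ihj]
    rcases lt_trichotomy (j + 1) (k : ℕ) with hlt | heq | hgt
    · have hsa' : k.succAbove i' = i'.castSucc :=
        Fin.succAbove_of_castSucc_lt _ _ (by simp [Fin.lt_def, hi']; omega)
      have hsap : k.succAbove ip = ip.castSucc :=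
        Fin.succAbove_of_castSucc_lt _ _ (by simp [Fin.lt_def, hip]; omega)
      have hc : Fin.contractNth k (· * ·) f i' = f i'.castSucc :=
        Fin.contractNth_apply_of_lt k _ f _ (by simp [hi']; omega)
      have hI : i'.castSucc.castSucc = ip.castSucc.succ := by ext; simp [hi', hip]
      rw [hsa', hsap, hc]
      conv_rhs => rw [Fin.partialProd_succ, hI]
    · have hsa' : k.succAbove i' = i'.succ :=
        Fin.succAbove_of_le_castSucc _ _ (by simp [Fin.le_def, hi']; omega)
      have hsap : k.succAbove ip = ip.castSucc :=
        Fin.succAbove_of_castSucc_lt _ _ (by simp [Fin.lt_def, hip]; omega)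
      have hc : Fin.contractNth k (· * ·) f i' = f i'.castSucc * f i'.succ :=
        Fin.contractNth_apply_of_eq k _ f _ (by simp [hi']; omega)
      have hI : i'.succ.castSucc = i'.castSucc.succ := (Fin.succ_castSucc _).symm
      have hI2 : i'.castSucc.castSucc = ip.castSucc.succ := by ext; simp [hi', hip]
      rw [hsa', hsap, hc]
      conv_rhs => rw [Fin.partialProd_succ, hI, Fin.partialProd_succ, hI2]
      rw [mul_assoc]
    · have hsa' : k.succAbove i' = i'.succ :=
        Fin.succAbove_of_le_castSucc _ _ (by simp [Fin.le_def, hi']; omega)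
      have hsap : k.succAbove ip = ip.succ :=
        Fin.succAbove_of_le_castSucc _ _ (by simp [Fin.le_def, hip]; omega)
      have hc : Fin.contractNth k (· * ·) f i' = f i'.succ :=
        Fin.contractNth_apply_of_gt k _ f _ (by simp [hi']; omega)
      have hI : i'.succ.castSucc = ip.succ.succ := by ext; simp [hi', hip]
      rw [hsa', hsap, hc]
      conv_rhs => rw [Fin.partialProd_succ, hI]


lemma list_prod_absorb_left {A : Type*} [Ring A] (L : List A) (a : A)
    (ha : a ∈ L) (haa : a * a = a) (hc : ∀ x, a * x = x * a) :
    a * L.prod = L.prod := by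
  induction L with
  | nil => simp at ha
  | cons b t ih =>
    rcases List.mem_cons.mp ha with rfl | hmem
    · rw [List.prod_cons, ← mul_assoc, haa]
    · rw [List.prod_cons, ← mul_assoc, hc b, mul_assoc, ih hmem]

lemma list_prod_absorb_right {A : Type*} [Ring A] (L : List A) (x : A)
    (h : ∀ a ∈ L, a * x = x) : L.prod * x = x := by
  induction L with
  | nil => simp
  | cons b t ih =>
    rw [List.prod_cons, mul_assoc, ih (fun a ha => h a (List.mem_cons_of_mem b ha)),
      h b List.mem_cons_self]

/-- Let `A = ∏_{g∈Λ} A_g` be a product of blocks with a transitive unital partial action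
`α` of `G`, and `w ∈ Z^n_par(G,A)` (`n ≥ 1`).  Then
`w(x₁,…,x_n) = 1_{(x₁,…,x_n)} ∏_{g∈Λ} θ_g[ w(g⁻¹x₁,x₂,…,x_n)
  + Σ_{k=1}^{n−1}(−1)^k w(g⁻¹,x₁,…,x_kx_{k+1},…,x_n) + (−1)^n w(g⁻¹,x₁,…,x_{n−1}) ]`.
Here the blocks of `A` are indexed by `ι`, identified with the subset `toG(ι) = Λ ⊆ G`
(with base block `i₀`, `toG i₀ = 1`), `θ_i(a) = α_{toG i}(pr₁(a))` lands in the block `i`,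
and the decomposition `a = ∏_g θ_g(α_{g⁻¹}(1_g a))` holds.  The alternating sum below is
indexed so that its summand `p = n` is the last term `(−1)^n w(g⁻¹,x₁,…,x_{n−1})`. -/
theorem cocycle_eq_product_of_theta
    {G : Type*} [Group G] {ι : Type*} [DecidableEq ι]
    (R : ι → Type*) [∀ i, Ring (R i)]
    (e : G → Π i, R i) (act : G → (Π i, R i) → Π i, R i)
    (he_central : ∀ g a, e g * a = a * e g)
    (he_idem : ∀ g, e g * e g = e g)
    (he_one : e 1 = 1)
    (hact_one : ∀ a, act 1 a = a)
    (hrange : ∀ g a, e g * act g (e g⁻¹ * a) = act g (e g⁻¹ * a))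
    (hadd : ∀ g a b, act g (e g⁻¹ * a + e g⁻¹ * b) = act g (e g⁻¹ * a) + act g (e g⁻¹ * b))
    (hmul : ∀ g a b, act g ((e g⁻¹ * a) * (e g⁻¹ * b)) = act g (e g⁻¹ * a) * act g (e g⁻¹ * b))
    (hbij : ∀ g, Set.BijOn (act g) {x | e g⁻¹ * x = x} {x | e g * x = x})
    (hcomp : ∀ g h a, e h⁻¹ * a = a → e g⁻¹ * act h a = act h a →
      e (g * h)⁻¹ * a = a ∧ act g (act h a) = act (g * h) a)
    (i₀ : ι) (toG : ι → G) (htoG_inj : Function.Injective toG) (htoG_one : toG i₀ = 1)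
    (hθ_supp : ∀ (i : ι) (a : Π i, R i) (j : ι), j ≠ i → theta R e act i₀ toG i a j = 0)
    (hblock : ∀ (i : ι) (a : Π i, R i), e (toG i)⁻¹ * proj0 R i₀ a = proj0 R i₀ a)
    (hdecomp : ∀ (a : Π i, R i) (j : ι),
      a j = theta R e act i₀ toG j (act (toG j)⁻¹ (e (toG j) * a)) j)
    {n : ℕ} (w : (Fin (n + 1) → G) → Π i, R i)
    (hw_mem : ∀ v, w v = oneT e v * w v)
    (hw_cocycle : ∀ v : Fin (n + 2) → G,
      act (v 0) (e (v 0)⁻¹ * w (Fin.tail v)) +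
        ∑ j : Fin (n + 2), (-1 : ℤ) ^ ((j : ℕ) + 1) •
          (e (Fin.partialProd v j.succ) * w (Fin.contractNth j (· * ·) v)) = 0) :
    ∀ v : Fin (n + 1) → G,
      w v = oneT e v *
        fun j : ι =>
          theta R e act i₀ toG j
            (w (Fin.contractNth 0 (· * ·) (Fin.cons (toG j)⁻¹ v)) +
              ∑ p : Fin (n + 1), (-1 : ℤ) ^ ((p : ℕ) + 1) •
                w (Fin.contractNth p.succ (· * ·) (Fin.cons (toG j)⁻¹ v))) j := by
  intro v
  -- ## global consequences of the axioms
  have hactzero : ∀ g : G, act g 0 = 0 := by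
    intro g
    have h := hadd g 0 0
    simp only [mul_zero, add_zero] at h
    exact add_eq_left.mp h.symm
  have hinv : ∀ (g : G) (x : Π i, R i), act g (act g⁻¹ (e g * x)) = e g * x := by
    intro g x
    have h1 : e g⁻¹⁻¹ * (e g * x) = e g * x := by rw [inv_inv, ← mul_assoc, he_idem]
    have h2 : e g⁻¹ * act g⁻¹ (e g * x) = act g⁻¹ (e g * x) := by
      have h := hrange g⁻¹ x
      rwa [inv_inv] at h
    have h3 := (hcomp g g⁻¹ (e g * x) h1 h2).2
    rw [h3, mul_inv_cancel, hact_one]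
  have hstab : ∀ g h : G, e (g * h) * act g (e g⁻¹ * e h) = act g (e g⁻¹ * e h) := by
    intro g h
    have hb1 : e h⁻¹ * act h⁻¹ (e h * e g⁻¹) = act h⁻¹ (e h * e g⁻¹) := by
      have hh := hrange h⁻¹ (e g⁻¹); rwa [inv_inv] at hh
    have hb2 : act h (act h⁻¹ (e h * e g⁻¹)) = e h * e g⁻¹ := hinv h (e g⁻¹)
    have hb3 : e g⁻¹ * act h (act h⁻¹ (e h * e g⁻¹)) = act h (act h⁻¹ (e h * e g⁻¹)) := by
      rw [hb2, ← mul_assoc, he_central g⁻¹ (e h), mul_assoc, he_idem]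
    have h4 := hcomp g h (act h⁻¹ (e h * e g⁻¹)) hb1 hb3
    have h5 : act g (e g⁻¹ * e h) = act (g * h) (act h⁻¹ (e h * e g⁻¹)) := by
      rw [← h4.2, hb2, he_central h (e g⁻¹)]
    rw [h5]
    have h6 := hrange (g * h) (act h⁻¹ (e h * e g⁻¹))
    rwa [h4.1] at h6
  have hkey0 : ∀ g h : G, act g (e g⁻¹ * e h) = e g * e (g * h) := by
    intro g h
    have hug : e g * act g (e g⁻¹ * e h) = act g (e g⁻¹ * e h) := hrange g (e h)
    have hugh := hstab g h
    have c1 : e g⁻¹ * act g⁻¹ (e g * e (g * h)) = act g⁻¹ (e g * e (g * h)) := by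
      have hh := hrange g⁻¹ (e (g * h)); rwa [inv_inv] at hh
    have c2 : e h * act g⁻¹ (e g * e (g * h)) = act g⁻¹ (e g * e (g * h)) := by
      have hh := hstab g⁻¹ (g * h)
      rwa [inv_inv, inv_mul_cancel_left] at hh
    have c4 : act g (act g⁻¹ (e g * e (g * h))) = e g * e (g * h) := hinv g (e (g * h))
    have c3 : act g (act g⁻¹ (e g * e (g * h)))
        = act g (e g⁻¹ * e h) * act g (act g⁻¹ (e g * e (g * h))) := by
      set c := act g⁻¹ (e g * e (g * h)) with hc
      have hcc : c = (e g⁻¹ * e h) * (e g⁻¹ * c) := by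
        rw [c1, mul_assoc, c2, c1]
      calc act g c = act g ((e g⁻¹ * e h) * (e g⁻¹ * c)) := by rw [← hcc]
        _ = act g (e g⁻¹ * e h) * act g (e g⁻¹ * c) := hmul g (e h) c
        _ = act g (e g⁻¹ * e h) * act g c := by rw [c1]
    have c5 : e g * e (g * h) = act g (e g⁻¹ * e h) * (e g * e (g * h)) := by
      rw [← c4]; exact c3
    have c6 : act g (e g⁻¹ * e h) = e g * e (g * h) * act g (e g⁻¹ * e h) := by
      rw [mul_assoc, hugh, hug]
    calc act g (e g⁻¹ * e h) = e g * e (g * h) * act g (e g⁻¹ * e h) := c6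
      _ = act g (e g⁻¹ * e h) * (e g * e (g * h)) := by
          rw [mul_assoc, he_central (g * h) (act g (e g⁻¹ * e h)), ← mul_assoc,
            he_central g (act g (e g⁻¹ * e h)), mul_assoc]
      _ = e g * e (g * h) := c5.symm
  -- ## properties of the projection
  have hproj_zero : proj0 R i₀ (0 : Π i, R i) = 0 := by
    funext j'; simp [proj0]
  have hproj_add : ∀ a b : Π i, R i,
      proj0 R i₀ (a + b) = proj0 R i₀ a + proj0 R i₀ b := by
    intro a b; funext j'; by_cases hj : j' = i₀ <;> simp [proj0, hj]
  have hproj_mul_e : ∀ (h : G) (x : Π i, R i),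
      proj0 R i₀ (e h * x) = e h * proj0 R i₀ x := by
    intro h x; funext j'; by_cases hj : j' = i₀ <;> simp [proj0, hj]
  funext j
  simp only [Pi.mul_apply]
  -- ## the additive map F = θ_j ∘ (strip the idempotent)
  have hFadd : ∀ a b : Π i, R i,
      act (toG j) (proj0 R i₀ (a + b))
        = act (toG j) (proj0 R i₀ a) + act (toG j) (proj0 R i₀ b) := by
    intro a b
    rw [hproj_add, ← hblock j a, ← hblock j b, hadd]
  set F : (Π i, R i) →+ (Π i, R i) :=
    AddMonoidHom.mk' (fun a => act (toG j) (proj0 R i₀ a)) hFadd with hFdef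
  have hFapp : ∀ a, F a = act (toG j) (proj0 R i₀ a) := by
    intro a; rw [hFdef]; rfl
  have hFtheta : ∀ a, theta R e act i₀ toG j a = F a := by
    intro a
    show act (toG j) (e (toG j)⁻¹ * proj0 R i₀ a) = F a
    rw [hblock, hFapp]
  have hFrange : ∀ x, e (toG j) * F x = F x := by
    intro x
    rw [hFapp]
    have hh := hrange (toG j) (proj0 R i₀ x)
    rwa [hblock] at hh
  have hFkey : ∀ (h : G) (x : Π i, R i),
      F (e h * x) = e (toG j) * e (toG j * h) * F x := by
    intro h x
    rw [hFapp, hFapp, hproj_mul_e]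
    have hsplit : e h * proj0 R i₀ x
        = (e (toG j)⁻¹ * e h) * (e (toG j)⁻¹ * proj0 R i₀ x) := by
      rw [hblock j x, he_central (toG j)⁻¹ (e h), mul_assoc, hblock j x]
    rw [hsplit, hmul, hkey0, hblock]
  -- ## partial products of the extended tuple
  have hq : ∀ m : Fin (n + 2),
      Fin.partialProd (Fin.cons (toG j)⁻¹ v) m.succ
        = (toG j)⁻¹ * Fin.partialProd v m := by
    intro m
    rw [Fin.partialProd_succ', Fin.cons_zero, Fin.tail_cons]
  -- ## stabilization of the contracted cocycle values
  have hstabm : ∀ k m : Fin (n + 2), m ≠ k →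
      e (Fin.partialProd v m) * F (w (Fin.contractNth k (· * ·) (Fin.cons (toG j)⁻¹ v)))
        = F (w (Fin.contractNth k (· * ·) (Fin.cons (toG j)⁻¹ v))) := by
    intro k m hm
    obtain ⟨i, hi⟩ := Fin.exists_succAbove_eq hm
    have hmem : e (Fin.partialProd (Fin.cons (toG j)⁻¹ v) m.succ) ∈
        List.ofFn (fun i : Fin (n + 1) =>
          e (Fin.partialProd (Fin.contractNth k (· * ·) (Fin.cons (toG j)⁻¹ v)) i.succ)) := by
      rw [List.mem_ofFn]
      exact ⟨i, by simp only [partialProd_contractNth_succ, hi]⟩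
    have habs : e (Fin.partialProd (Fin.cons (toG j)⁻¹ v) m.succ) *
        w (Fin.contractNth k (· * ·) (Fin.cons (toG j)⁻¹ v))
        = w (Fin.contractNth k (· * ·) (Fin.cons (toG j)⁻¹ v)) := by
      conv_lhs => rw [hw_mem (Fin.contractNth k (· * ·) (Fin.cons (toG j)⁻¹ v))]
      rw [← mul_assoc,
        show e (Fin.partialProd (Fin.cons (toG j)⁻¹ v) m.succ) *
            oneT e (Fin.contractNth k (· * ·) (Fin.cons (toG j)⁻¹ v))
          = oneT e (Fin.contractNth k (· * ·) (Fin.cons (toG j)⁻¹ v)) from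
          list_prod_absorb_left _ _ hmem (he_idem _) (he_central _),
        ← hw_mem]
    have h2 : F (w (Fin.contractNth k (· * ·) (Fin.cons (toG j)⁻¹ v)))
        = e (toG j) * e (Fin.partialProd v m) *
          F (w (Fin.contractNth k (· * ·) (Fin.cons (toG j)⁻¹ v))) := by
      conv_lhs => rw [← habs]
      rw [hq m, hFkey, mul_inv_cancel_left]
    rw [h2, ← mul_assoc,
      he_central (Fin.partialProd v m) (e (toG j) * e (Fin.partialProd v m)),
      mul_assoc (e (toG j)), he_idem]
  -- ## the term-by-term identity
  have hterm : ∀ k : Fin (n + 2),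
      F (e (Fin.partialProd (Fin.cons (toG j)⁻¹ v) k.succ) *
          w (Fin.contractNth k (· * ·) (Fin.cons (toG j)⁻¹ v)))
        = oneT e v * F (w (Fin.contractNth k (· * ·) (Fin.cons (toG j)⁻¹ v))) := by
    intro k
    rw [hq k, hFkey, mul_inv_cancel_left,
      he_central (toG j) (e (Fin.partialProd v k)), mul_assoc, hFrange]
    rcases eq_or_ne k 0 with rfl | hk0
    · rw [Fin.partialProd_zero, he_one, one_mul]
      exact (list_prod_absorb_right _ _ (fun a ha => by
        rw [List.mem_ofFn] at ha
        obtain ⟨i, rfl⟩ := ha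
        exact hstabm 0 i.succ (Fin.succ_ne_zero i))).symm
    · obtain ⟨kp, rfl⟩ := Fin.eq_succ_of_ne_zero hk0
      have hmem2 : e (Fin.partialProd v kp.succ) ∈
          List.ofFn (fun i : Fin (n + 1) => e (Fin.partialProd v i.succ)) := by
        rw [List.mem_ofFn]; exact ⟨kp, rfl⟩
      have habs1 : ∀ a ∈ List.ofFn (fun i : Fin (n + 1) => e (Fin.partialProd v i.succ)),
          a * (e (Fin.partialProd v kp.succ) *
            F (w (Fin.contractNth kp.succ (· * ·) (Fin.cons (toG j)⁻¹ v))))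
          = e (Fin.partialProd v kp.succ) *
            F (w (Fin.contractNth kp.succ (· * ·) (Fin.cons (toG j)⁻¹ v))) := by
        intro a ha
        rw [List.mem_ofFn] at ha
        obtain ⟨i, rfl⟩ := ha
        rcases eq_or_ne i kp with rfl | hik
        · rw [← mul_assoc, he_idem]
        · rw [← mul_assoc,
            he_central (Fin.partialProd v i.succ) (e (Fin.partialProd v kp.succ)),
            mul_assoc, hstabm kp.succ i.succ (fun h => hik (Fin.succ_injective _ h))]
      have hA := list_prod_absorb_right _ _ habs1
      have hB : oneT e v * e (Fin.partialProd v kp.succ) = oneT e v := by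
        rw [← he_central (Fin.partialProd v kp.succ) (oneT e v)]
        exact list_prod_absorb_left _ _ hmem2 (he_idem _) (he_central _)
      calc e (Fin.partialProd v kp.succ) *
            F (w (Fin.contractNth kp.succ (· * ·) (Fin.cons (toG j)⁻¹ v)))
          = oneT e v * (e (Fin.partialProd v kp.succ) *
            F (w (Fin.contractNth kp.succ (· * ·) (Fin.cons (toG j)⁻¹ v)))) := hA.symm
        _ = (oneT e v * e (Fin.partialProd v kp.succ)) *
            F (w (Fin.contractNth kp.succ (· * ·) (Fin.cons (toG j)⁻¹ v))) :=
            (mul_assoc _ _ _).symm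
        _ = oneT e v *
            F (w (Fin.contractNth kp.succ (· * ·) (Fin.cons (toG j)⁻¹ v))) := by rw [hB]
  -- ## the cocycle identity for the extended tuple
  have hX : act (toG j)⁻¹ (e (toG j) * w v)
      = ∑ k : Fin (n + 2), (-1 : ℤ) ^ (k : ℕ) •
          (e (Fin.partialProd (Fin.cons (toG j)⁻¹ v) k.succ) *
            w (Fin.contractNth k (· * ·) (Fin.cons (toG j)⁻¹ v))) := by
    have hc := hw_cocycle (Fin.cons (toG j)⁻¹ v)
    simp only [Fin.cons_zero, Fin.tail_cons, inv_inv] at hc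
    have h1 := eq_neg_of_add_eq_zero_left hc
    rw [h1, ← Finset.sum_neg_distrib]
    refine Finset.sum_congr rfl (fun k _ => ?_)
    simp [pow_succ, mul_smul, neg_smul, smul_neg]
  -- ## assembling everything
  have hchain : F (act (toG j)⁻¹ (e (toG j) * w v))
      = oneT e v * F (w (Fin.contractNth 0 (· * ·) (Fin.cons (toG j)⁻¹ v)) +
          ∑ p : Fin (n + 1), (-1 : ℤ) ^ ((p : ℕ) + 1) •
            w (Fin.contractNth p.succ (· * ·) (Fin.cons (toG j)⁻¹ v))) := by
    rw [hX, map_sum]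
    rw [show (∑ k : Fin (n + 2),
        F ((-1 : ℤ) ^ (k : ℕ) •
          (e (Fin.partialProd (Fin.cons (toG j)⁻¹ v) k.succ) *
            w (Fin.contractNth k (· * ·) (Fin.cons (toG j)⁻¹ v)))))
        = ∑ k : Fin (n + 2), (-1 : ℤ) ^ (k : ℕ) •
            (oneT e v * F (w (Fin.contractNth k (· * ·) (Fin.cons (toG j)⁻¹ v)))) from
      Finset.sum_congr rfl (fun k _ => by rw [map_zsmul, hterm k])]
    rw [show (∑ k : Fin (n + 2), (-1 : ℤ) ^ (k : ℕ) •
          (oneT e v * F (w (Fin.contractNth k (· * ·) (Fin.cons (toG j)⁻¹ v)))))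
        = oneT e v * ∑ k : Fin (n + 2), (-1 : ℤ) ^ (k : ℕ) •
            F (w (Fin.contractNth k (· * ·) (Fin.cons (toG j)⁻¹ v))) from by
      rw [Finset.mul_sum]
      exact Finset.sum_congr rfl (fun k _ => (mul_smul_comm _ _ _).symm)]
    congr 1
    rw [map_add, map_sum, Fin.sum_univ_succ]
    simp only [Fin.val_zero, pow_zero, one_smul, Fin.val_succ, map_zsmul]
  have hfinal := hdecomp (w v) j
  rw [hFtheta] at hfinal
  rw [hfinal, hchain, Pi.mul_apply, hFtheta]

end
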